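/- Let n be an integer and let the abelian group G be presented by generators t, μ₁, μ₂ with relations μ₂ = a·μ₁ + b·n·μ₂ and n·μ₁ = c·μ₁ + d·n·μ₂, where a, b, c, d are integers with ad - bc = -1 and bn^2 - 2n + c = ±1. Then G ≅ ℤ (with t a free generator surviving, i.e. the subgroup generated by μ₁, μ₂ is trivial and G ≅ ℤ). -/
import Mathlib


/-- Let `G` be the abelian group with generators `t, μ₁, μ₂` (coordinates `0, 1, 2`
of `ℤ³`) and relations `μ₂ = a μ₁ + b n μ₂` and `n μ₁ = c μ₁ + d n μ₂`, where
`a d - b c = -1` and `b n² - 2 n + c = ±1`.  Then `G ≅ ℤ` and the images of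
`μ₁` and `μ₂` in `G` are trivial. -/
theorem homology_of_sewn_up_exterior (n a b c d : ℤ) (h : a * d - b * c = -1)
    (hn : b * n ^ 2 - 2 * n + c = 1 ∨ b * n ^ 2 - 2 * n + c = -1) :
    ∀ S : Submodule ℤ (Fin 3 → ℤ),
      S = Submodule.span ℤ { ![0, -a, 1 - b * n], ![0, n - c, -d * n] } →
      Nonempty (((Fin 3 → ℤ) ⧸ S) ≃ₗ[ℤ] ℤ) ∧
      Submodule.Quotient.mk (p := S) ![0, 1, 0] = 0 ∧
      Submodule.Quotient.mk (p := S) ![0, 0, 1] = 0 := by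
  intro S hS
  have he : (b * n ^ 2 - 2 * n + c) * (b * n ^ 2 - 2 * n + c) = 1 := by
    rcases hn with h1 | h1 <;> rw [h1] <;> ring
  set π : (Fin 3 → ℤ) →ₗ[ℤ] ℤ := LinearMap.proj 0 with hπ
  have hK : S = LinearMap.ker π := by
    rw [hS]
    apply le_antisymm
    · rw [Submodule.span_le]
      rintro v (rfl | rfl) <;> simp [hπ]
    · intro x hx
      have hx0 : x 0 = 0 := hx
      rw [Submodule.mem_span_pair]
      refine ⟨(b * n ^ 2 - 2 * n + c) * ((-d * n) * x 1 - (n - c) * x 2),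
        (b * n ^ 2 - 2 * n + c) * (-(1 - b * n) * x 1 + (-a) * x 2), ?_⟩
      funext i
      fin_cases i <;>
        simp [Matrix.cons_val_zero, Matrix.cons_val_one, hx0, smul_eq_mul]
      · linear_combination
          (x 1) * he + (b * n ^ 2 - 2 * n + c) * n * x 1 * h
      · linear_combination
          (x 2) * he + (b * n ^ 2 - 2 * n + c) * n * x 2 * h
  have hsurj : Function.Surjective π := fun z => ⟨![z, 0, 0], rfl⟩
  refine ⟨⟨(Submodule.quotEquivOfEq S _ hK).trans
      (π.quotKerEquivOfSurjective hsurj)⟩, ?_, ?_⟩ <;>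
    rw [Submodule.Quotient.mk_eq_zero, hK] <;> simp [hπ]
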